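/- Milman converse theorem for groups: Let X be a uniquely divisible, connected, locally convex, Hausdorff topological additive commutative group, and let C ⊆ X be a compact set such that the closed convex hull closure(conv(C)) is compact. Then every extreme point of closure(conv(C)) belongs to C, i.e., E(closure(conv(C))) ⊆ C. -/

import Mathlib

/-- A subset `A` of an additive commutative monoid is convex if whenever
`m • x = m₁ • x₁ + ⋯ + mₙ • xₙ` with `xᵢ ∈ A`, positive integers `mᵢ`
and `m = m₁ + ⋯ + mₙ`, then `x ∈ A`. -/
def MConvex {X : Type*} [AddCommMonoid X] (A : Set X) : Prop :=
  ∀ (n : ℕ), 0 < n → ∀ (x : X) (xs : Fin n → X) (ms : Fin n → ℕ),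
    (∀ i, xs i ∈ A) → (∀ i, 0 < ms i) →
    (∑ i, ms i) • x = ∑ i, ms i • xs i → x ∈ A

/-- The convex hull of `A`: the smallest convex set containing `A`. -/
def mconvHull {X : Type*} [AddCommMonoid X] (A : Set X) : Set X :=
  ⋂₀ {C : Set X | A ⊆ C ∧ MConvex C}

/-- A topological additive commutative monoid is locally convex if its topology has a basis
consisting of convex sets. -/
def LocallyMConvex (X : Type*) [AddCommMonoid X] [TopologicalSpace X] : Prop :=
  ∃ B : Set (Set X), TopologicalSpace.IsTopologicalBasis B ∧ ∀ U ∈ B, MConvex U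

/-- `x` is an extreme point of `A` if `x ∈ A` and whenever
`m • x = m₁ • x₁ + ⋯ + mₙ • xₙ` with `xᵢ ∈ A`, positive integers `mᵢ`
and `m = m₁ + ⋯ + mₙ`, then `x₁ = ⋯ = xₙ = x`. -/
def MExtreme {X : Type*} [AddCommMonoid X] (A : Set X) (x : X) : Prop :=
  x ∈ A ∧ ∀ (n : ℕ), 0 < n → ∀ (xs : Fin n → X) (ms : Fin n → ℕ),
    (∀ i, xs i ∈ A) → (∀ i, 0 < ms i) →
    (∑ i, ms i) • x = ∑ i, ms i • xs i → ∀ i, xs i = x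
section Part1

variable {X : Type*} [AddCommGroup X]

/-- Division by a positive natural number, given unique divisibility. -/
noncomputable def ndiv (hud : ∀ n : ℕ, 0 < n → Function.Bijective (fun x : X => n • x))
    (n : ℕ) (x : X) : X :=
  if h : 0 < n then Function.surjInv (hud n h).surjective x else 0

variable (hud : ∀ n : ℕ, 0 < n → Function.Bijective (fun x : X => n • x))

set_option linter.unusedVariables false

lemma nsmul_ndiv {n : ℕ} (hn : 0 < n) (x : X) : n • ndiv hud n x = x := by
  rw [ndiv, dif_pos hn]
  exact Function.surjInv_eq (hud n hn).surjective x

include hud in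
lemma nsmul_left_injective {n : ℕ} (hn : 0 < n) {a b : X} (h : n • a = n • b) : a = b :=
  (hud n hn).injective h

lemma ndiv_nsmul {n : ℕ} (hn : 0 < n) (x : X) : ndiv hud n (n • x) = x :=
  nsmul_left_injective hud hn (nsmul_ndiv hud hn _)

lemma ndiv_eq_iff {n : ℕ} (hn : 0 < n) {x y : X} : ndiv hud n y = x ↔ y = n • x := by
  constructor
  · rintro rfl; rw [nsmul_ndiv hud hn]
  · rintro rfl; exact ndiv_nsmul hud hn x

/-- n = 1 instance of convexity. -/
lemma MConvex.mem1 {A : Set X} (hA : MConvex A) {m : ℕ} (hm : 0 < m) {x a : X}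
    (ha : a ∈ A) (h : m • x = m • a) : x ∈ A := by
  have := hA 1 one_pos x (fun _ => a) (fun _ => m) (fun _ => ha) (fun _ => hm)
  simp only [Fin.sum_univ_one] at this
  exact this h

/-- n = 2 instance of convexity. -/
lemma MConvex.mem2 {A : Set X} (hA : MConvex A) {p q : ℕ} (hp : 0 < p) (hq : 0 < q)
    {x a b : X} (ha : a ∈ A) (hb : b ∈ A) (h : (p + q) • x = p • a + q • b) : x ∈ A := by
  have := hA 2 two_pos x ![a, b] ![p, q] (fun i => by fin_cases i <;> assumption)
    (fun i => by fin_cases i <;> assumption)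
  simp only [Fin.sum_univ_two, Matrix.cons_val_zero, Matrix.cons_val_one, Matrix.head_cons] at this
  exact this h

lemma mconvex_univ : MConvex (Set.univ : Set X) := fun _ _ _ _ _ _ _ _ => trivial

lemma mconvex_empty : MConvex (∅ : Set X) := by
  intro n hn x xs ms hmem _ _
  exact absurd (hmem ⟨0, hn⟩) (by simp)

lemma mconvex_sInter {S : Set (Set X)} (h : ∀ A ∈ S, MConvex A) : MConvex (⋂₀ S) := by
  intro n hn x xs ms hmem hpos hsum
  exact fun A hA => h A hA n hn x xs ms (fun i => hmem i A hA) hpos hsum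

lemma subset_mconvHull (A : Set X) : A ⊆ mconvHull A :=
  fun x hx B hB => hB.1 hx

lemma mconvHull_min {A B : Set X} (hAB : A ⊆ B) (hB : MConvex B) : mconvHull A ⊆ B :=
  fun x hx => hx B ⟨hAB, hB⟩

lemma mconvex_mconvHull (A : Set X) : MConvex (mconvHull A) :=
  mconvex_sInter (fun _ hB => hB.2)

lemma mconvHull_mono {A B : Set X} (h : A ⊆ B) : mconvHull A ⊆ mconvHull B :=
  mconvHull_min (h.trans (subset_mconvHull B)) (mconvex_mconvHull B)

lemma MConvex.mconvHull_eq {A : Set X} (hA : MConvex A) : mconvHull A = A :=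
  le_antisymm (mconvHull_min le_rfl hA) (subset_mconvHull A)

lemma MConvex.inter {A B : Set X} (hA : MConvex A) (hB : MConvex B) : MConvex (A ∩ B) :=
  fun n hn x xs ms hmem hpos hsum =>
    ⟨hA n hn x xs ms (fun i => (hmem i).1) hpos hsum,
     hB n hn x xs ms (fun i => (hmem i).2) hpos hsum⟩

lemma MConvex.neg {A : Set X} (hA : MConvex A) : MConvex (-A) := by
  intro n hn x xs ms hmem hpos hsum
  refine hA n hn (-x) (fun i => -(xs i)) ms (fun i => hmem i) hpos ?_
  rw [smul_neg, hsum]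
  simp [smul_neg, Finset.sum_neg_distrib]

lemma MConvex.translate {A : Set X} (hA : MConvex A) (t : X) : MConvex ((t + ·) '' A) := by
  intro n hn x xs ms hmem hpos hsum
  choose vs hvs hvs2 using hmem
  have key : (∑ i, ms i) • (x - t) = ∑ i, ms i • vs i := by
    have : ∑ i, ms i • xs i = ∑ i, ms i • vs i + (∑ i, ms i) • t := by
      rw [Finset.sum_smul]
      rw [← Finset.sum_add_distrib]
      congr 1; ext i
      rw [← hvs2 i, smul_add]
      abel
    rw [smul_sub, hsum, this]
    abel
  exact ⟨x - t, hA n hn (x - t) vs ms hvs hpos key, by simp⟩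

include hud in
/-- Representation lemma: weighted averages with nonneg coefficients of points of a
convex set are multiples of points of the set. -/
lemma MConvex.exists_rep {A : Set X} (hA : MConvex A) {ι : Type*} [DecidableEq ι]
    (s : Finset ι) (ks : ι → ℕ) (vs : ι → X) (hv : ∀ i ∈ s, vs i ∈ A)
    (hk : 0 < ∑ i ∈ s, ks i) :
    ∃ y ∈ A, (∑ i ∈ s, ks i) • y = ∑ i ∈ s, ks i • vs i := by
  induction s using Finset.induction_on with
  | empty => simp at hk
  | @insert a s has ih =>
    rw [Finset.sum_insert has] at hk ⊢
    rw [Finset.sum_insert has]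
    rcases Nat.eq_zero_or_pos (∑ i ∈ s, ks i) with hR | hR
    · have hall : ∀ i ∈ s, ks i = 0 := by
        intro i hi
        exact Finset.sum_eq_zero_iff.mp hR i hi
      have hzero : ∑ i ∈ s, ks i • vs i = 0 :=
        Finset.sum_eq_zero (fun i hi => by rw [hall i hi, zero_smul])
      have hka : 0 < ks a := by omega
      exact ⟨vs a, hv a (Finset.mem_insert_self a s), by rw [hR, hzero]; simp⟩
    · obtain ⟨yr, hyr, hyreq⟩ := ih (fun i hi => hv i (Finset.mem_insert_of_mem hi)) hR
      rcases Nat.eq_zero_or_pos (ks a) with hka | hka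
      · exact ⟨yr, hyr, by rw [hka, zero_smul, zero_add, zero_add, hyreq]⟩
      · set y := ndiv hud (ks a + ∑ i ∈ s, ks i) (ks a • vs a + (∑ i ∈ s, ks i) • yr) with hy
        have hspec : (ks a + ∑ i ∈ s, ks i) • y = ks a • vs a + (∑ i ∈ s, ks i) • yr :=
          nsmul_ndiv hud (by omega) _
        refine ⟨y, hA.mem2 hka hR (hv a (Finset.mem_insert_self a s)) hyr hspec, ?_⟩
        rw [hspec, hyreq]

end Part1
section Part2

variable {X : Type*} [AddCommGroup X]
variable (hud : ∀ n : ℕ, 0 < n → Function.Bijective (fun x : X => n • x))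

include hud in
/-- The convex hull of the union of two nonempty convex sets consists of the
two-term combinations. -/
lemma mconvHull_union_two {A B : Set X} (hA : MConvex A) (hB : MConvex B)
    (hAne : A.Nonempty) (hBne : B.Nonempty) :
    mconvHull (A ∪ B) =
      {s : X | ∃ a b : ℕ, ∃ y ∈ A, ∃ z ∈ B, 0 < a + b ∧ (a + b) • s = a • y + b • z} := by
  obtain ⟨y₀, hy₀⟩ := hAne
  obtain ⟨z₀, hz₀⟩ := hBne
  apply le_antisymm
  · -- hull ⊆ S : S is convex and contains A ∪ B
    apply mconvHull_min
    · rintro s (hs | hs)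
      · exact ⟨1, 0, s, hs, z₀, hz₀, one_pos, by simp⟩
      · exact ⟨0, 1, y₀, hy₀, s, hs, one_pos, by simp⟩
    · intro n hn x xs ms hmem hpos hsum
      choose a b y hy z hz hab heq using hmem
      set P := ∏ i, (a i + b i) with hP
      have hPpos : 0 < P := Finset.prod_pos (fun i _ => hab i)
      have hdvd : ∀ i, (a i + b i) ∣ P := fun i => Finset.dvd_prod_of_mem _ (Finset.mem_univ i)
      set c := fun i => P / (a i + b i) with hcdef
      have hc : ∀ i, c i * (a i + b i) = P := fun i => Nat.div_mul_cancel (hdvd i)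
      have hPi : ∀ i, P • xs i = (c i * a i) • y i + (c i * b i) • z i := by
        intro i
        rw [← hc i, mul_smul, heq i, smul_add, smul_smul, smul_smul]
      set KA := ∑ i, ms i * (c i * a i) with hKA
      set KB := ∑ i, ms i * (c i * b i) with hKB
      have htot : (P * ∑ i, ms i) • x =
          (∑ i, (ms i * (c i * a i)) • y i) + ∑ i, (ms i * (c i * b i)) • z i := by
        have h1 : (P * ∑ i, ms i) • x = P • ((∑ i, ms i) • x) := mul_smul _ _ _
        rw [h1, hsum, Finset.smul_sum]
        rw [← Finset.sum_add_distrib]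
        refine Finset.sum_congr rfl (fun i _ => ?_)
        rw [smul_comm, hPi i, smul_add, smul_smul, smul_smul]
      have hKsum : KA + KB = P * ∑ i, ms i := by
        rw [hKA, hKB, ← Finset.sum_add_distrib]
        rw [Finset.mul_sum]
        refine Finset.sum_congr rfl (fun i _ => ?_)
        rw [← Nat.mul_add, ← Nat.mul_add, hc i]
        ring
      have hKpos : 0 < KA + KB := by
        rw [hKsum]
        exact Nat.mul_pos hPpos (by
          have := hpos ⟨0, hn⟩
          calc 0 < ms ⟨0, hn⟩ := this
          _ ≤ ∑ i, ms i := Finset.single_le_sum (fun i _ => Nat.zero_le _) (Finset.mem_univ _))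
      rcases Nat.eq_zero_or_pos KA with hKA0 | hKApos
      · -- all A-coefficients vanish
        have hyzero : ∑ i, (ms i * (c i * a i)) • y i = (0 : X) :=
          Finset.sum_eq_zero (fun i hi => by
            rw [Finset.sum_eq_zero_iff.mp hKA0 i hi, zero_smul])
        have hKBpos : 0 < KB := by omega
        obtain ⟨zst, hzst, hzsteq⟩ := hB.exists_rep hud Finset.univ
          (fun i => ms i * (c i * b i)) z (fun i _ => hz i) hKBpos
        refine ⟨0, KB, y₀, hy₀, zst, hzst, by omega, ?_⟩
        rw [zero_smul, zero_add, zero_add, hzsteq]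
        have hKB' : KB = P * ∑ i, ms i := by omega
        rw [hKB', htot, hyzero, zero_add]
      · rcases Nat.eq_zero_or_pos KB with hKB0 | hKBpos
        · have hzzero : ∑ i, (ms i * (c i * b i)) • z i = (0 : X) :=
            Finset.sum_eq_zero (fun i hi => by
              rw [Finset.sum_eq_zero_iff.mp hKB0 i hi, zero_smul])
          obtain ⟨yst, hyst, hysteq⟩ := hA.exists_rep hud Finset.univ
            (fun i => ms i * (c i * a i)) y (fun i _ => hy i) hKApos
          refine ⟨KA, 0, yst, hyst, z₀, hz₀, by omega, ?_⟩
          rw [zero_smul, add_zero, add_zero, hysteq]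
          have hKA' : KA = P * ∑ i, ms i := by omega
          rw [hKA', htot, hzzero, add_zero]
        · obtain ⟨yst, hyst, hysteq⟩ := hA.exists_rep hud Finset.univ
            (fun i => ms i * (c i * a i)) y (fun i _ => hy i) hKApos
          obtain ⟨zst, hzst, hzsteq⟩ := hB.exists_rep hud Finset.univ
            (fun i => ms i * (c i * b i)) z (fun i _ => hz i) hKBpos
          refine ⟨KA, KB, yst, hyst, zst, hzst, hKpos, ?_⟩
          rw [hysteq, hzsteq, hKsum, htot]
  · -- S ⊆ hull
    rintro s ⟨a, b, y, hy, z, hz, hab, heq⟩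
    have hyH : y ∈ mconvHull (A ∪ B) := subset_mconvHull _ (Or.inl hy)
    have hzH : z ∈ mconvHull (A ∪ B) := subset_mconvHull _ (Or.inr hz)
    rcases Nat.eq_zero_or_pos a with ha | ha
    · subst ha
      have heq' : b • s = b • z := by simpa using heq
      exact (mconvex_mconvHull _).mem1 (show 0 < b by omega) hzH heq'
    · rcases Nat.eq_zero_or_pos b with hb | hb
      · subst hb
        have heq' : a • s = a • y := by simpa using heq
        exact (mconvex_mconvHull _).mem1 ha hyH heq'
      · exact (mconvex_mconvHull _).mem2 ha hb hyH hzH heq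

end Part2
section Part3

variable {X : Type*} [AddCommGroup X] [TopologicalSpace X] [IsTopologicalAddGroup X]
variable (hud : ∀ n : ℕ, 0 < n → Function.Bijective (fun x : X => n • x))
variable (hlc : LocallyMConvex X)

set_option linter.unusedSectionVars false

include hud hlc in
lemma nsmul_image_open {n : ℕ} (hn : 0 < n) {U : Set X} (hU : IsOpen U) :
    IsOpen ((fun x : X => n • x) '' U) := by
  obtain ⟨Bas, hbasis, hconv⟩ := hlc
  rw [isOpen_iff_forall_mem_open]
  rintro p ⟨u, hu, rfl⟩
  obtain ⟨W, hWB, huW, hWU⟩ := hbasis.exists_subset_of_mem_open hu hU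
  have hWconv := hconv W hWB
  have hWopen := hbasis.isOpen hWB
  refine ⟨(fun w => (n - 1) • u + w) '' W, ?_, ?_, ?_⟩
  · rintro q ⟨w, hw, rfl⟩
    set z := ndiv hud n ((n - 1) • u + w) with hz
    have hzspec : n • z = (n - 1) • u + w := nsmul_ndiv hud hn _
    have hzW : z ∈ W := by
      rcases Nat.lt_or_ge 1 n with h1 | h1
      · refine hWconv.mem2 (p := n - 1) (q := 1) (by omega) one_pos huW hw ?_
        rw [show n - 1 + 1 = n by omega, hzspec, one_smul]
      · have hn1 : n = 1 := by omega
        subst hn1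
        simp only [Nat.sub_self, zero_smul, zero_add, one_smul] at hzspec
        rwa [hzspec]
    exact ⟨z, hWU hzW, hzspec⟩
  · exact (Homeomorph.isOpen_image (Homeomorph.addLeft ((n - 1) • u))).mpr hWopen
  · exact ⟨u, huW, by show (n - 1) • u + u = n • u; rw [← succ_nsmul, show n - 1 + 1 = n by omega]⟩

include hud hlc in
lemma continuous_ndiv {n : ℕ} (hn : 0 < n) : Continuous (ndiv hud n : X → X) := by
  rw [continuous_def]
  intro U hU
  have : (ndiv hud n : X → X) ⁻¹' U = (fun x : X => n • x) '' U := by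
    ext x
    constructor
    · intro h
      exact ⟨ndiv hud n x, h, nsmul_ndiv hud hn x⟩
    · rintro ⟨u, hu, rfl⟩
      show ndiv hud n (n • u) ∈ U
      rwa [ndiv_nsmul hud hn]
  rw [this]
  exact nsmul_image_open hud hlc hn hU

include hud hlc in
lemma MConvex.closure {A : Set X} (hA : MConvex A) : MConvex (_root_.closure A) := by
  intro n hn x xs ms hmem hpos hsum
  set m := ∑ i, ms i with hm
  have hmpos : 0 < m := by
    have := hpos ⟨0, hn⟩
    calc 0 < ms ⟨0, hn⟩ := this
    _ ≤ m := Finset.single_le_sum (fun i _ => Nat.zero_le _) (Finset.mem_univ _)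
  set g : (Fin n → X) → X := fun ys => ndiv hud m (∑ i, ms i • ys i) with hg
  have hgcont : Continuous g := by
    apply (continuous_ndiv hud hlc hmpos).comp
    exact continuous_finset_sum _ (fun i _ => (continuous_nsmul (ms i)).comp (continuous_apply i))
  have hmaps : Set.MapsTo g (Set.pi Set.univ (fun _ : Fin n => A)) A := by
    intro ys hys
    exact hA n hn (g ys) ys ms (fun i => hys i (Set.mem_univ i)) hpos (nsmul_ndiv hud hmpos _)
  have hxs : xs ∈ _root_.closure (Set.pi Set.univ (fun _ : Fin n => A)) := by
    rw [closure_pi_set]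
    exact fun i _ => hmem i
  have : g xs ∈ _root_.closure A := map_mem_closure hgcont hxs hmaps
  have hgx : g xs = x := by
    apply nsmul_left_injective hud hmpos
    rw [nsmul_ndiv hud hmpos, hsum]
  rwa [hgx] at this

include hlc in
lemma exists_symm_convex_nhd {O : Set X} (hO : O ∈ nhds (0 : X)) :
    ∃ W : Set X, IsOpen W ∧ MConvex W ∧ (0 : X) ∈ W ∧ (∀ w ∈ W, -w ∈ W) ∧ W ⊆ O := by
  obtain ⟨Bas, hbasis, hconv⟩ := hlc
  obtain ⟨O', hO'O, hO'open, h0O'⟩ := mem_nhds_iff.mp hO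
  obtain ⟨B, hBB, h0B, hBO⟩ := hbasis.exists_subset_of_mem_open h0O' hO'open
  refine ⟨B ∩ -B, (hbasis.isOpen hBB).inter (hbasis.isOpen hBB).neg,
    (hconv B hBB).inter (hconv B hBB).neg, ⟨h0B, by simpa using h0B⟩, ?_, fun x hx => hO'O (hBO hx.1)⟩
  rintro w ⟨hw1, hw2⟩
  exact ⟨by simpa using hw2, by simpa using hw1⟩

/-- If `|k| ≤ m` and `m • u = k • w` with `w` in a symmetric convex set containing 0,
then `u` is in the set. -/
lemma mem_of_natAbs_le (hud : ∀ n : ℕ, 0 < n → Function.Bijective (fun x : X => n • x))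
    {W : Set X} (hW : MConvex W) (h0 : (0 : X) ∈ W) (hsymm : ∀ w ∈ W, -w ∈ W)
    {k : ℤ} {m : ℕ} (hm : 0 < m) (hkm : k.natAbs ≤ m) {w : X} (hw : w ∈ W) {u : X}
    (hu : m • u = k • w) : u ∈ W := by
  obtain ⟨w₀, hw₀, hj⟩ : ∃ w₀ ∈ W, m • u = k.natAbs • w₀ := by
    rcases le_or_gt 0 k with h | h
    · refine ⟨w, hw, ?_⟩
      rw [hu, ← natCast_zsmul w k.natAbs, Int.natAbs_of_nonneg h]
    · refine ⟨-w, hsymm w hw, ?_⟩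
      rw [hu, ← natCast_zsmul (-w) k.natAbs, zsmul_neg, ← neg_zsmul]
      congr 1
      omega
  rcases Nat.eq_zero_or_pos k.natAbs with h0' | hpos'
  · rw [h0', zero_smul] at hj
    have : u = 0 := nsmul_left_injective hud hm (by rw [hj, smul_zero])
    rwa [this]
  · rcases Nat.lt_or_ge k.natAbs m with hlt | hge
    · refine hW.mem2 (p := k.natAbs) (q := m - k.natAbs) hpos' (by omega) hw₀ h0 ?_
      rw [show k.natAbs + (m - k.natAbs) = m by omega, hj, smul_zero, add_zero]
    · have : k.natAbs = m := by omega
      rw [this] at hj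
      have : u = w₀ := nsmul_left_injective hud hm hj
      rwa [this]

include hud hlc in
lemma nsmul_image_mono {W : Set X} (hW : MConvex W) (h0 : (0 : X) ∈ W) {M N : ℕ}
    (hM : 0 < M) (hMN : M ≤ N) :
    (fun x : X => M • x) '' W ⊆ (fun x : X => N • x) '' W := by
  rintro p ⟨w, hw, rfl⟩
  have hN : 0 < N := by omega
  set w' := ndiv hud N (M • w) with hw'
  have hspec : N • w' = M • w := nsmul_ndiv hud hN _
  have hw'W : w' ∈ W := by
    rcases Nat.lt_or_ge M N with hlt | hge
    · refine hW.mem2 (p := M) (q := N - M) hM (by omega) hw h0 ?_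
      rw [show M + (N - M) = N by omega, hspec, smul_zero, add_zero]
    · have : M = N := by omega
      subst this
      have : w' = w := nsmul_left_injective hud hN hspec
      rwa [this]
  exact ⟨w', hw'W, hspec⟩

include hud hlc in
lemma absorbs_compact [ConnectedSpace X] {W : Set X} (hWo : IsOpen W) (hW : MConvex W)
    (h0 : (0 : X) ∈ W) (hsymm : ∀ w ∈ W, -w ∈ W) {D : Set X} (hD : IsCompact D) :
    ∃ M : ℕ, 0 < M ∧ ∀ d ∈ D, ∃ w ∈ W, M • w = d := by
  set G : AddSubgroup X :=
    { carrier := {x | ∃ M : ℕ, 0 < M ∧ ∃ w ∈ W, M • w = x}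
      zero_mem' := ⟨1, one_pos, 0, h0, smul_zero 1⟩
      add_mem' := by
        rintro x y ⟨M, hM, w1, hw1, rfl⟩ ⟨N, hN, w2, hw2, rfl⟩
        refine ⟨M + N, by omega, ndiv hud (M + N) (M • w1 + N • w2),
          hW.mem2 hM hN hw1 hw2 (nsmul_ndiv hud (by omega) _), nsmul_ndiv hud (by omega) _⟩
      neg_mem' := by
        rintro x ⟨M, hM, w, hw, rfl⟩
        exact ⟨M, hM, -w, hsymm w hw, by rw [smul_neg]⟩ } with hG
  have hGopen : IsOpen (G : Set X) := by
    rw [isOpen_iff_forall_mem_open]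
    rintro x ⟨M, hM, w, hw, rfl⟩
    exact ⟨(fun x : X => M • x) '' W,
      fun p hp => by
        obtain ⟨w', hw', rfl⟩ := hp
        exact ⟨M, hM, w', hw', rfl⟩,
      nsmul_image_open hud hlc hM hWo, ⟨w, hw, rfl⟩⟩
  have hGuniv : (G : Set X) = Set.univ :=
    IsClopen.eq_univ ⟨G.isClosed_of_isOpen hGopen, hGopen⟩ ⟨0, G.zero_mem⟩
  have hall : ∀ x : X, ∃ M : ℕ, 0 < M ∧ ∃ w ∈ W, M • w = x := by
    intro x
    have : x ∈ (G : Set X) := by rw [hGuniv]; trivial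
    exact this
  choose Mf hMf wf hwf hwfeq using hall
  rcases D.eq_empty_or_nonempty with rfl | hDne
  · exact ⟨1, one_pos, fun d hd => absurd hd (by simp)⟩
  obtain ⟨t, htD, htcover⟩ := hD.elim_nhds_subcover (fun x => (fun y : X => Mf x • y) '' W)
    (fun x _ => (nsmul_image_open hud hlc (hMf x) hWo).mem_nhds ⟨wf x, hwf x, hwfeq x⟩)
  refine ⟨(∑ x ∈ t, Mf x) + 1, by omega, fun d hd => ?_⟩
  obtain ⟨x, hxt, hdx⟩ := Set.mem_iUnion₂.mp (htcover hd)
  have hle : Mf x ≤ (∑ x ∈ t, Mf x) + 1 := by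
    have := Finset.single_le_sum (f := Mf) (fun i _ => Nat.zero_le _) hxt
    omega
  obtain ⟨w, hw, hweq⟩ := nsmul_image_mono hud hlc hW h0 (hMf x) hle hdx
  exact ⟨w, hw, hweq⟩

include hud hlc in
lemma tendsto_ndiv_smallcoef [ConnectedSpace X] {D : Set X} (hD : IsCompact D)
    {ι : Type*} {F : Filter ι} (k : ι → ℤ) (m : ι → ℕ) (hm : ∀ i, 0 < m i)
    (w : ι → X) (hw : ∀ i, w i ∈ D)
    (h : Filter.Tendsto (fun i => ((k i).natAbs : ℝ) / (m i : ℝ)) F (nhds 0)) :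
    Filter.Tendsto (fun i => ndiv hud (m i) (k i • w i)) F (nhds (0 : X)) := by
  rw [Filter.tendsto_def]
  intro O hO
  obtain ⟨W, hWo, hWc, h0W, hsymm, hWO⟩ := exists_symm_convex_nhd hlc hO
  obtain ⟨M, hM, habs⟩ := absorbs_compact hud hlc hWo hWc h0W hsymm hD
  have hev : ∀ᶠ i in F, ((k i).natAbs : ℝ) / (m i : ℝ) < 1 / (M : ℝ) :=
    h.eventually (gt_mem_nhds (by positivity))
  refine Filter.mem_of_superset hev ?_
  intro i hi
  have hbound : (k i).natAbs * M ≤ m i := by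
    have hmpos : (0 : ℝ) < (m i : ℝ) := by exact_mod_cast hm i
    have hMpos : (0 : ℝ) < (M : ℝ) := by exact_mod_cast hM
    simp only [Set.mem_setOf_eq] at hi
    rw [div_lt_div_iff₀ hmpos hMpos] at hi
    have : ((k i).natAbs : ℝ) * M < m i := by linarith [hi]
    exact_mod_cast this.le
  obtain ⟨w', hw', hw'eq⟩ := habs (w i) (hw i)
  show ndiv hud (m i) (k i • w i) ∈ O
  apply hWO
  refine mem_of_natAbs_le hud hWc h0W hsymm (hm i) (k := k i * (M : ℤ))
    (by rw [Int.natAbs_mul]; simpa using hbound) hw' ?_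
  rw [nsmul_ndiv hud (hm i), ← hw'eq, ← natCast_zsmul w' M, smul_smul]

include hud hlc in
lemma tendsto_ndiv_boundedcoef {ι : Type*} {F : Filter ι} (k : ι → ℤ) (m : ι → ℕ)
    (hm : ∀ i, 0 < m i) (hb : ∀ i, (k i).natAbs ≤ m i) (w : ι → X)
    (hw : Filter.Tendsto w F (nhds (0 : X))) :
    Filter.Tendsto (fun i => ndiv hud (m i) (k i • w i)) F (nhds (0 : X)) := by
  rw [Filter.tendsto_def]
  intro O hO
  obtain ⟨W, hWo, hWc, h0W, hsymm, hWO⟩ := exists_symm_convex_nhd hlc hO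
  have hev : ∀ᶠ i in F, w i ∈ W := hw (hWo.mem_nhds h0W)
  refine Filter.mem_of_superset hev ?_
  intro i hi
  exact hWO (mem_of_natAbs_le hud hWc h0W hsymm (hm i) (hb i) hi (nsmul_ndiv hud (hm i) _))

end Part3
section Part4

variable {X : Type*} [AddCommGroup X] [TopologicalSpace X] [IsTopologicalAddGroup X]
  [ConnectedSpace X] [T2Space X]
variable (hud : ∀ n : ℕ, 0 < n → Function.Bijective (fun x : X => n • x))
variable (hlc : LocallyMConvex X)

set_option linter.unusedSectionVars false
set_option maxHeartbeats 1000000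

include hud hlc in
/-- Milman-type result for the union of two compact convex sets. -/
lemma extreme_mem_union_two {K₁ K₂ : Set X} (hK₁c : IsCompact K₁) (hK₂c : IsCompact K₂)
    (hK₁ : MConvex K₁) (hK₂ : MConvex K₂) {x : X}
    (hx : MExtreme (closure (mconvHull (K₁ ∪ K₂))) x) : x ∈ K₁ ∪ K₂ := by
  rcases K₁.eq_empty_or_nonempty with rfl | ⟨y₀, hy₀⟩
  · right
    have : mconvHull (∅ ∪ K₂) = K₂ := by rw [Set.empty_union, hK₂.mconvHull_eq]
    have hx1 := hx.1
    rwa [this, hK₂c.isClosed.closure_eq] at hx1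
  rcases K₂.eq_empty_or_nonempty with rfl | ⟨z₀, hz₀⟩
  · left
    have : mconvHull (K₁ ∪ ∅) = K₁ := by rw [Set.union_empty, hK₁.mconvHull_eq]
    have hx1 := hx.1
    rwa [this, hK₁c.isClosed.closure_eq] at hx1
  -- the two-term representation of the hull
  set S : Set X :=
    {s : X | ∃ a b : ℕ, ∃ y ∈ K₁, ∃ z ∈ K₂, 0 < a + b ∧ (a + b) • s = a • y + b • z} with hS
  have hShull : mconvHull (K₁ ∪ K₂) = S :=
    mconvHull_union_two hud hK₁ hK₂ ⟨y₀, hy₀⟩ ⟨z₀, hz₀⟩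
  have hxS : x ∈ closure S := by rw [← hShull]; exact hx.1
  -- choice of representations
  have hchoice : ∀ s : X, ∃ a b : ℕ, ∃ y ∈ K₁, ∃ z ∈ K₂,
      0 < a + b ∧ (s ∈ S → (a + b) • s = a • y + b • z) := by
    intro s
    by_cases hs : s ∈ S
    · obtain ⟨a, b, y, hy, z, hz, hab, heq⟩ := hs
      exact ⟨a, b, y, hy, z, hz, hab, fun _ => heq⟩
    · exact ⟨1, 0, y₀, hy₀, z₀, hz₀, one_pos, fun h => absurd h hs⟩
  choose a b y hyK z hzK hab heqS using hchoice
  -- the ultrafilter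
  have hne : (nhds x ⊓ Filter.principal S).NeBot := mem_closure_iff_clusterPt.mp hxS
  obtain ⟨U, hU⟩ := Ultrafilter.exists_le (nhds x ⊓ Filter.principal S)
  have hUx : ↑U ≤ nhds x := hU.trans inf_le_left
  have hUS : S ∈ U := Filter.le_principal_iff.mp (hU.trans inf_le_right)
  -- the limiting weight and points
  set q : X → ℝ := fun s => (a s : ℝ) / ((a s + b s : ℕ) : ℝ) with hqdef
  have hq01 : ∀ s, q s ∈ Set.Icc (0 : ℝ) 1 := by
    intro s
    have habs : (0 : ℝ) < ((a s + b s : ℕ) : ℝ) := by exact_mod_cast hab s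
    constructor
    · positivity
    · rw [div_le_one habs]
      exact_mod_cast Nat.le_add_right _ _
  obtain ⟨t, htmem, htq'⟩ := (isCompact_Icc (a := (0:ℝ)) (b := 1)).ultrafilter_le_nhds
    (U.map q) (by rw [Filter.le_principal_iff, Ultrafilter.coe_map, Filter.mem_map]
                  exact Filter.univ_mem' hq01)
  have htq : Filter.Tendsto q (↑U) (nhds t) := htq'
  obtain ⟨y₁, hy₁K, hty'⟩ := hK₁c.ultrafilter_le_nhds (U.map y)
    (by rw [Filter.le_principal_iff, Ultrafilter.coe_map, Filter.mem_map]
        exact Filter.univ_mem' hyK)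
  have hty : Filter.Tendsto y (↑U) (nhds y₁) := hty'
  obtain ⟨z₁, hz₁K, htz'⟩ := hK₂c.ultrafilter_le_nhds (U.map z)
    (by rw [Filter.le_principal_iff, Ultrafilter.coe_map, Filter.mem_map]
        exact Filter.univ_mem' hzK)
  have htz : Filter.Tendsto z (↑U) (nhds z₁) := htz'
  have hidx : Filter.Tendsto (fun s : X => s) (↑U) (nhds x) := hUx
  -- basic smul relation
  have hrel : ∀ s ∈ S, (a s + b s) • s = a s • y s + b s • z s := fun s hs => heqS s hs
  -- key identities
  have hkey1 : ∀ s ∈ S, s - y s = ndiv hud (a s + b s) ((b s : ℤ) • (z s - y s)) := by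
    intro s hs
    apply nsmul_left_injective hud (hab s)
    rw [nsmul_ndiv hud (hab s)]
    rw [natCast_zsmul, smul_sub, smul_sub, hrel s hs, add_smul]
    abel
  have hkey2 : ∀ s ∈ S, s - z s = ndiv hud (a s + b s) ((a s : ℤ) • (y s - z s)) := by
    intro s hs
    apply nsmul_left_injective hud (hab s)
    rw [nsmul_ndiv hud (hab s)]
    rw [natCast_zsmul, smul_sub, smul_sub, hrel s hs, add_smul]
    abel
  -- compact set of differences
  set D : Set X := (fun p : X × X => p.1 - p.2) '' ((K₁ ∪ K₂) ×ˢ (K₁ ∪ K₂)) with hD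
  have hDc : IsCompact D :=
    ((hK₁c.union hK₂c).prod (hK₁c.union hK₂c)).image (continuous_fst.sub continuous_snd)
  have hzyD : ∀ s, z s - y s ∈ D := fun s => ⟨(z s, y s), ⟨Or.inr (hzK s), Or.inl (hyK s)⟩, rfl⟩
  have hyzD : ∀ s, y s - z s ∈ D := fun s => ⟨(y s, z s), ⟨Or.inl (hyK s), Or.inr (hzK s)⟩, rfl⟩
  -- limit of s - y s
  have htsy : Filter.Tendsto (fun s : X => s - y s) (↑U) (nhds (x - y₁)) := hidx.sub hty
  have htsz : Filter.Tendsto (fun s : X => s - z s) (↑U) (nhds (x - z₁)) := hidx.sub htz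
  rcases eq_or_lt_of_le htmem.1 with ht0 | ht0
  · -- t = 0 : x = z₁ ∈ K₂
    right
    have hcoef : Filter.Tendsto (fun s => (((a s : ℤ)).natAbs : ℝ) / ((a s + b s : ℕ) : ℝ))
        (↑U) (nhds 0) := by
      have : (fun s => (((a s : ℤ)).natAbs : ℝ) / ((a s + b s : ℕ) : ℝ)) = q := by
        funext s; simp [hqdef]
      rw [this, ht0]
      exact htq
    have hnd : Filter.Tendsto (fun s => ndiv hud (a s + b s) ((a s : ℤ) • (y s - z s)))
        (↑U) (nhds 0) :=
      tendsto_ndiv_smallcoef hud hlc hDc _ _ hab _ hyzD hcoef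
    have h2 : Filter.Tendsto (fun s : X => s - z s) (↑U) (nhds 0) :=
      hnd.congr' (Filter.mem_of_superset hUS (fun s hs => (hkey2 s hs).symm))
    have : x - z₁ = 0 := tendsto_nhds_unique htsz h2
    have : x = z₁ := by
      rw [sub_eq_zero] at this; exact this
    rwa [this]
  rcases eq_or_lt_of_le htmem.2 with ht1 | ht1
  · -- t = 1 : x = y₁ ∈ K₁
    left
    have hcoef : Filter.Tendsto (fun s => (((b s : ℤ)).natAbs : ℝ) / ((a s + b s : ℕ) : ℝ))
        (↑U) (nhds 0) := by
      have heqf : (fun s => (((b s : ℤ)).natAbs : ℝ) / ((a s + b s : ℕ) : ℝ))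
          = fun s => 1 - q s := by
        funext s
        have habs : ((a s + b s : ℕ) : ℝ) ≠ 0 := by
          have : (0 : ℝ) < ((a s + b s : ℕ) : ℝ) := by exact_mod_cast hab s
          linarith
        have : ((b s : ℝ)) / ((a s + b s : ℕ) : ℝ) = 1 - q s := by
          rw [hqdef, eq_sub_iff_add_eq, ← add_div, div_eq_one_iff_eq habs]
          push_cast
          ring
        simpa using this
      rw [heqf]
      have : Filter.Tendsto (fun s => 1 - q s) (↑U) (nhds (1 - t)) :=
        tendsto_const_nhds.sub htq
      rwa [ht1, sub_self] at this
    have hnd : Filter.Tendsto (fun s => ndiv hud (a s + b s) ((b s : ℤ) • (z s - y s)))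
        (↑U) (nhds 0) :=
      tendsto_ndiv_smallcoef hud hlc hDc _ _ hab _ hzyD hcoef
    have h2 : Filter.Tendsto (fun s : X => s - y s) (↑U) (nhds 0) :=
      hnd.congr' (Filter.mem_of_superset hUS (fun s hs => (hkey1 s hs).symm))
    have : x - y₁ = 0 := tendsto_nhds_unique htsy h2
    have : x = y₁ := by rw [sub_eq_zero] at this; exact this
    rwa [this]
  -- 0 < t < 1
  obtain ⟨d0, hd0⟩ := exists_nat_one_div_lt (lt_min ht0 (by linarith : (0:ℝ) < 1 - t))
  set d : ℕ := d0 + 1 with hd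
  have hdpos : 0 < d := Nat.succ_pos d0
  have hdt : 1 / (d : ℝ) < t := by
    have := lt_min_iff.mp hd0
    simpa [hd] using this.1
  have hdt' : 1 / (d : ℝ) < 1 - t := by
    have := lt_min_iff.mp hd0
    simpa [hd] using this.2
  set p : X := ndiv hud d (d • x - y₁ + z₁) with hp
  set p' : X := ndiv hud d (d • x + y₁ - z₁) with hp'
  have hpspec : d • p = d • x - y₁ + z₁ := nsmul_ndiv hud hdpos _
  have hp'spec : d • p' = d • x + y₁ - z₁ := nsmul_ndiv hud hdpos _
  -- ψ functions
  set ψ : X → X := fun s => ndiv hud d (d • s - y s + z s) with hψ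
  set ψ' : X → X := fun s => ndiv hud d (d • s + y s - z s) with hψ'
  have hψtend : Filter.Tendsto ψ (↑U) (nhds p) := by
    have h1 : Filter.Tendsto (fun s : X => d • s - y s + z s) (↑U) (nhds (d • x - y₁ + z₁)) :=
      ((((continuous_nsmul d).tendsto x).comp hidx).sub hty).add htz
    exact ((continuous_ndiv hud hlc hdpos).tendsto _).comp h1
  have hψ'tend : Filter.Tendsto ψ' (↑U) (nhds p') := by
    have h1 : Filter.Tendsto (fun s : X => d • s + y s - z s) (↑U) (nhds (d • x + y₁ - z₁)) :=
      ((((continuous_nsmul d).tendsto x).comp hidx).add hty).sub htz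
    exact ((continuous_ndiv hud hlc hdpos).tendsto _).comp h1
  -- eventual membership of ψ s in S
  have hqev1 : ∀ᶠ s in (↑U : Filter X), 1 / (d : ℝ) < q s := htq.eventually (lt_mem_nhds hdt)
  have hqev2 : ∀ᶠ s in (↑U : Filter X), q s < 1 - 1 / (d : ℝ) :=
    htq.eventually (gt_mem_nhds (by linarith))
  have hmemψ : ∀ᶠ s in (↑U : Filter X), ψ s ∈ S := by
    filter_upwards [hUS, hqev1] with s hs hq1
    have habs : 0 < a s + b s := hab s
    have hmlt : a s + b s < d * a s := by
      have hm : (0 : ℝ) < ((a s + b s : ℕ) : ℝ) := by exact_mod_cast habs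
      have hdR : (0 : ℝ) < (d : ℝ) := by exact_mod_cast hdpos
      rw [hqdef] at hq1
      rw [div_lt_div_iff₀ hdR hm] at hq1
      have : ((a s + b s : ℕ) : ℝ) < (d : ℝ) * (a s : ℝ) := by linarith
      exact_mod_cast this
    refine ⟨d * a s - (a s + b s), d * b s + (a s + b s), y s, hyK s, z s, hzK s,
      Nat.add_pos_right _ (Nat.add_pos_right _ habs), ?_⟩
    have he : d * (a s + b s) = d * a s + d * b s := by ring
    have hsum : d * a s - (a s + b s) + (d * b s + (a s + b s)) = d * (a s + b s) := by omega
    rw [hsum]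
    have hψs : d • ψ s = d • s - y s + z s := nsmul_ndiv hud hdpos _
    have lhs : (d * (a s + b s)) • ψ s = (d * a s) • y s + (d * b s) • z s
        - (a s + b s) • y s + (a s + b s) • z s := by
      rw [mul_comm, mul_smul, hψs, smul_add, smul_sub, smul_comm, hrel s hs, smul_add,
        smul_smul, smul_smul]
    rw [lhs, sub_nsmul _ (le_of_lt hmlt)]
    simp only [add_nsmul]
    abel
  have hmemψ' : ∀ᶠ s in (↑U : Filter X), ψ' s ∈ S := by
    filter_upwards [hUS, hqev2] with s hs hq2
    have habs : 0 < a s + b s := hab s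
    have hmlt : a s + b s < d * b s := by
      have hm : (0 : ℝ) < ((a s + b s : ℕ) : ℝ) := by exact_mod_cast habs
      have hdR : (0 : ℝ) < (d : ℝ) := by exact_mod_cast hdpos
      have hq1 : 1 / (d : ℝ) < 1 - q s := by linarith
      rw [hqdef] at hq1
      have habs' : ((a s + b s : ℕ) : ℝ) ≠ 0 := by linarith
      have hbq : 1 - (a s : ℝ) / ((a s + b s : ℕ) : ℝ) = (b s : ℝ) / ((a s + b s : ℕ) : ℝ) := by
        rw [eq_comm, eq_sub_iff_add_eq, ← add_div, div_eq_one_iff_eq habs']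
        push_cast
        ring
      rw [hbq] at hq1
      rw [div_lt_div_iff₀ hdR hm] at hq1
      have : ((a s + b s : ℕ) : ℝ) < (d : ℝ) * (b s : ℝ) := by linarith
      exact_mod_cast this
    refine ⟨d * a s + (a s + b s), d * b s - (a s + b s), y s, hyK s, z s, hzK s,
      Nat.add_pos_left (Nat.add_pos_right _ habs) _, ?_⟩
    have he : d * (a s + b s) = d * a s + d * b s := by ring
    have hsum : d * a s + (a s + b s) + (d * b s - (a s + b s)) = d * (a s + b s) := by omega
    rw [hsum]
    have hψs : d • ψ' s = d • s + y s - z s := nsmul_ndiv hud hdpos _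
    have lhs : (d * (a s + b s)) • ψ' s = (d * a s) • y s + (d * b s) • z s
        + (a s + b s) • y s - (a s + b s) • z s := by
      rw [mul_comm, mul_smul, hψs, smul_sub, smul_add, smul_comm, hrel s hs, smul_add,
        smul_smul, smul_smul]
    rw [lhs, sub_nsmul _ (le_of_lt hmlt)]
    simp only [add_nsmul]
    abel
  -- p and p' lie in the closed hull
  have hpcl : p ∈ closure (mconvHull (K₁ ∪ K₂)) := by
    rw [hShull]; exact mem_closure_of_tendsto hψtend hmemψ
  have hp'cl : p' ∈ closure (mconvHull (K₁ ∪ K₂)) := by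
    rw [hShull]; exact mem_closure_of_tendsto hψ'tend hmemψ'
  -- extremality forces p = p' = x
  have hsum2 : (2 : ℕ) • x = p + p' := by
    apply nsmul_left_injective hud hdpos
    rw [smul_add, hpspec, hp'spec, smul_comm d 2, two_smul]
    abel
  have hext := hx.2 2 two_pos ![p, p'] ![1, 1]
    (fun i => by fin_cases i <;> assumption)
    (fun i => by fin_cases i <;> norm_num)
    (by simp only [Fin.sum_univ_two, Matrix.cons_val_zero, Matrix.cons_val_one, Matrix.head_cons,
        one_smul]
        rw [show (1 + 1 : ℕ) = 2 from rfl, hsum2])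
  have hpx : p = x := by simpa using hext 0
  -- deduce y₁ = z₁
  have hyz : z₁ = y₁ := by
    have h1 : d • x = d • x - y₁ + z₁ := by rw [← hpspec, hpx]
    have h2 : d • x + y₁ = d • x + z₁ := by
      conv_lhs => rw [h1]
      abel
    exact (add_left_cancel h2).symm
  -- finally x = y₁
  left
  have hznd : Filter.Tendsto (fun s : X => z s - y s) (↑U) (nhds 0) := by
    have := htz.sub hty
    rwa [hyz, sub_self] at this
  have hbd : Filter.Tendsto (fun s => ndiv hud (a s + b s) ((b s : ℤ) • (z s - y s)))
      (↑U) (nhds 0) :=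
    tendsto_ndiv_boundedcoef hud hlc _ _ hab (fun s => by simpa using Nat.le_add_left (b s) (a s)) _ hznd
  have h2 : Filter.Tendsto (fun s : X => s - y s) (↑U) (nhds 0) :=
    hbd.congr' (Filter.mem_of_superset hUS (fun s hs => (hkey1 s hs).symm))
  have : x - y₁ = 0 := tendsto_nhds_unique htsy h2
  have : x = y₁ := by rw [sub_eq_zero] at this; exact this
  rwa [this]

end Part4
section Part5

variable {X : Type*} [AddCommGroup X] [TopologicalSpace X] [IsTopologicalAddGroup X]
  [ConnectedSpace X] [T2Space X]
variable (hud : ∀ n : ℕ, 0 < n → Function.Bijective (fun x : X => n • x))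
variable (hlc : LocallyMConvex X)

set_option linter.unusedSectionVars false
set_option maxHeartbeats 1000000

lemma mconvHull_empty : mconvHull (∅ : Set X) = ∅ :=
  le_antisymm (mconvHull_min le_rfl mconvex_empty) (Set.empty_subset _)

lemma mextreme_mono {A B : Set X} {x : X} (h : MExtreme A x) (hBA : B ⊆ A) (hxB : x ∈ B) :
    MExtreme B x :=
  ⟨hxB, fun n hn xs ms hmem => h.2 n hn xs ms (fun i => hBA (hmem i))⟩

include hud hlc in
lemma clhull_union_clhull (A B : Set X) :
    closure (mconvHull (A ∪ closure (mconvHull B))) = closure (mconvHull (A ∪ B)) := by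
  apply le_antisymm
  · apply closure_minimal _ isClosed_closure
    apply mconvHull_min _ ((mconvex_mconvHull (A ∪ B)).closure hud hlc)
    rintro u (hu | hu)
    · exact subset_closure (subset_mconvHull _ (Or.inl hu))
    · exact closure_mono (mconvHull_mono Set.subset_union_right) hu
  · apply closure_mono
    apply mconvHull_mono
    exact Set.union_subset Set.subset_union_left
      (fun u hu => Or.inr (subset_closure (subset_mconvHull _ hu)))

include hud hlc in
lemma extreme_mem_of_finset {ι : Type*} [DecidableEq ι] (s : Finset ι) (Ks : ι → Set X)
    (hc : ∀ i ∈ s, IsCompact (Ks i)) (hconv : ∀ i ∈ s, MConvex (Ks i))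
    (hbig : IsCompact (closure (mconvHull (⋃ i ∈ s, Ks i)))) {x : X}
    (hx : MExtreme (closure (mconvHull (⋃ i ∈ s, Ks i))) x) : ∃ i ∈ s, x ∈ Ks i := by
  induction s using Finset.induction_on with
  | empty =>
    exfalso
    have := hx.1
    simp only [Finset.notMem_empty, Set.iUnion_of_empty, Set.iUnion_empty, mconvHull_empty,
      closure_empty] at this
    exact this
  | @insert a s has ih =>
    set B := closure (mconvHull (⋃ i ∈ s, Ks i)) with hB
    have hsub : (⋃ i ∈ s, Ks i) ⊆ ⋃ i ∈ insert a s, Ks i :=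
      Set.biUnion_subset_biUnion_left (fun i hi => Finset.mem_insert_of_mem hi)
    have hBsub : B ⊆ closure (mconvHull (⋃ i ∈ insert a s, Ks i)) :=
      closure_mono (mconvHull_mono hsub)
    have hBc : IsCompact B := hbig.of_isClosed_subset isClosed_closure hBsub
    have hBconv : MConvex B := (mconvex_mconvHull _).closure hud hlc
    have hsetEq : closure (mconvHull (Ks a ∪ B)) =
        closure (mconvHull (⋃ i ∈ insert a s, Ks i)) := by
      rw [hB, clhull_union_clhull hud hlc, Finset.set_biUnion_insert]
    have hx' : MExtreme (closure (mconvHull (Ks a ∪ B))) x := by rw [hsetEq]; exact hx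
    have hmem := extreme_mem_union_two hud hlc (hc a (Finset.mem_insert_self a s)) hBc
      (hconv a (Finset.mem_insert_self a s)) hBconv hx'
    rcases hmem with hmem | hmem
    · exact ⟨a, Finset.mem_insert_self a s, hmem⟩
    · obtain ⟨i, hi, hxi⟩ := ih (fun i hi => hc i (Finset.mem_insert_of_mem hi))
        (fun i hi => hconv i (Finset.mem_insert_of_mem hi)) hBc
        (mextreme_mono hx hBsub hmem)
      exact ⟨i, Finset.mem_insert_of_mem hi, hxi⟩

include hlc in
lemma exists_convex_nhd {O : Set X} (hO : O ∈ nhds (0 : X)) :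
    ∃ V : Set X, IsOpen V ∧ MConvex V ∧ (0 : X) ∈ V ∧ V ⊆ O := by
  obtain ⟨Bas, hbasis, hconv⟩ := hlc
  obtain ⟨O', hO'O, hO'open, h0O'⟩ := mem_nhds_iff.mp hO
  obtain ⟨V, hVB, h0V, hVO⟩ := hbasis.exists_subset_of_mem_open h0O' hO'open
  exact ⟨V, hbasis.isOpen hVB, hconv V hVB, h0V, hVO.trans hO'O⟩

end Part5

theorem milman_converse_for_groups
    {X : Type*} [AddCommGroup X] [TopologicalSpace X] [IsTopologicalAddGroup X]
    [ConnectedSpace X] [T2Space X]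
    (hud : ∀ n : ℕ, 0 < n → Function.Bijective (fun x : X => n • x))
    (hlc : LocallyMConvex X)
    {C : Set X} (hcomp : IsCompact C)
    (hcch : IsCompact (closure (mconvHull C))) :
    {x : X | MExtreme (closure (mconvHull C)) x} ⊆ C := by
  intro x hx
  simp only [Set.mem_setOf_eq] at hx
  classical
  have hCclosed : IsClosed C := hcomp.isClosed
  suffices hcl : x ∈ closure C by rwa [hCclosed.closure_eq] at hcl
  rw [mem_closure_iff_nhds]
  intro N hN
  -- a closed neighborhood trick
  have hf : Continuous fun u : X => x - u := continuous_const.sub continuous_id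
  have hN' : (fun u : X => x - u) ⁻¹' N ∈ nhds (0 : X) :=
    hf.continuousAt.preimage_mem_nhds (by simpa using hN)
  obtain ⟨T, hT0, hTclosed, hTN'⟩ := exists_mem_nhds_isClosed_subset hN'
  obtain ⟨V, hVopen, hVconv, h0V, hVT⟩ := exists_convex_nhd hlc hT0
  set U : X → Set X := fun c => (c + ·) '' V with hUdef
  have hUopen : ∀ c, IsOpen (U c) := fun c =>
    (Homeomorph.isOpen_image (Homeomorph.addLeft c)).mpr hVopen
  have hUc : ∀ c, c ∈ U c := fun c => ⟨0, h0V, add_zero c⟩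
  obtain ⟨t, htC, hcover⟩ := hcomp.elim_nhds_subcover U
    (fun c _ => (hUopen c).mem_nhds (hUc c))
  set Ks : X → Set X := fun c => closure (mconvHull (C ∩ U c)) with hKs
  have hKsub : ∀ c, Ks c ⊆ closure (mconvHull C) :=
    fun c => closure_mono (mconvHull_mono Set.inter_subset_left)
  have hKeq : closure (mconvHull (⋃ c ∈ t, Ks c)) = closure (mconvHull C) := by
    apply le_antisymm
    · apply closure_minimal _ isClosed_closure
      apply mconvHull_min _ ((mconvex_mconvHull C).closure hud hlc)
      exact Set.iUnion₂_subset (fun c _ => hKsub c)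
    · apply closure_mono
      apply mconvHull_mono
      intro u hu
      obtain ⟨c, hc, hcU⟩ := Set.mem_iUnion₂.mp (hcover hu)
      exact Set.mem_biUnion hc (subset_closure (subset_mconvHull _ ⟨hu, hcU⟩))
  obtain ⟨c, hct, hxc⟩ := extreme_mem_of_finset hud hlc t Ks
    (fun c _ => hcch.of_isClosed_subset isClosed_closure (hKsub c))
    (fun c _ => (mconvex_mconvHull _).closure hud hlc)
    (by rw [hKeq]; exact hcch)
    (by rw [hKeq]; exact hx)
  -- x lies in c + closure V
  have hxcl : x ∈ (c + ·) '' closure V := by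
    have h1 : Ks c ⊆ closure (U c) := closure_mono (by
      calc mconvHull (C ∩ U c) ⊆ mconvHull (U c) := mconvHull_mono Set.inter_subset_right
      _ = U c := (hVconv.translate c).mconvHull_eq)
    have h2 : (c + ·) '' closure V = closure (U c) := (Homeomorph.addLeft c).image_closure V
    rw [h2]
    exact h1 hxc
  obtain ⟨v, hv, hxv⟩ := hxcl
  have hvT : v ∈ T := (hTclosed.closure_subset_iff.mpr hVT) hv
  have hcN : c ∈ N := by
    have : x - v ∈ N := hTN' hvT
    have hc' : c = x - v := by rw [← hxv]; simp
    rwa [hc']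
  exact ⟨c, hcN, htC c hct⟩
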